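/- Let f : {0,1}^n → {0,1} with N = |f⁻¹(1)| > 0, let S ⊆ [n], and define G(x) = 1 iff Pr_{w~{0,1}^{S̄}}[f(x_S ∘ w) = 1] ≥ 1/2. If a ∈ G⁻¹(1), then the number of y ∈ f⁻¹(1) with y_S = a_S is at least 2^{|S̄|}/2, and hence Pr_{u~f⁻¹(1), w~{0,1}^{S̄}}[u_S ∘ w = a] ≥ 1/(2N). Consequently, if |G⁻¹(1) ∖ f⁻¹(1)| ≥ κN/2, then Pr_{u~f⁻¹(1), w~{0,1}^{S̄}}[f(u_S ∘ w) = 0] ≥ κ/4. -/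

import Mathlib

open Finset

def satOf {n : ℕ} (f : (Fin n → Bool) → Bool) : Finset (Fin n → Bool) :=
  Finset.univ.filter (fun x => f x = true)

/-- The majority-vote function: `majOf f S x = 1` iff rerandomizing the coordinates outside
`S` yields a satisfying assignment of `f` with probability at least 1/2 (ties toward 1). -/
def majOf {n : ℕ} (f : (Fin n → Bool) → Bool) (S : Finset (Fin n)) :
    (Fin n → Bool) → Bool :=
  fun x => decide (2 ^ n ≤ 2 * (Finset.univ.filter
    (fun v : Fin n → Bool => f (fun i => if i ∈ S then x i else v i) = true)).card)

lemma card_agree {n : ℕ} (S : Finset (Fin n)) (a : Fin n → Bool) :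
    ((univ : Finset (Fin n → Bool)).filter (fun w => ∀ i ∉ S, w i = a i)).card
      = 2 ^ S.card := by
  rw [show (2:ℕ)^S.card = Fintype.card ({x // x ∈ S} → Bool) by
    simp]
  rw [← Finset.card_univ]
  apply Finset.card_nbij' (fun w (j : {x // x ∈ S}) => w j)
    (fun g => fun i => if h : i ∈ S then g ⟨i, h⟩ else a i)
  · intro w hw; simp
  · intro g hg
    simp only [mem_coe, mem_filter, mem_univ, true_and]
    intro i hi; simp [hi]
  · intro w hw
    simp only [mem_coe, mem_filter, mem_univ, true_and] at hw
    funext i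
    by_cases h : i ∈ S <;> simp [h, hw i]
  · intro g hg; funext j; simp [j.2]

lemma key {n : ℕ} (f : (Fin n → Bool) → Bool) (S : Finset (Fin n)) (a : Fin n → Bool)
    (ha : a ∈ satOf (majOf f S)) :
    2 ^ n ≤ 2 * (((satOf f ×ˢ (univ : Finset (Fin n → Bool))).filter
        (fun p => (fun i => if i ∈ S then p.1 i else p.2 i) = a)).card) := by
  have ha' : 2 ^ n ≤ 2 * ((univ : Finset (Fin n → Bool)).filter
      (fun v => f (fun i => if i ∈ S then a i else v i) = true)).card := by
    simpa [satOf, majOf] using ha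
  refine ha'.trans (Nat.mul_le_mul_left 2 ?_)
  apply Finset.card_le_card_of_injOn
    (fun v => ((fun i => if i ∈ S then a i else v i), (fun i => if i ∈ S then v i else a i)))
  · intro v hv
    simp only [mem_coe, mem_filter, mem_univ, true_and] at hv
    simp only [mem_coe, mem_filter, mem_product, mem_univ, and_true]
    refine ⟨?_, ?_⟩
    · simpa [satOf] using hv
    · funext i; by_cases h : i ∈ S <;> simp [h]
  · intro v1 _ v2 _ h
    have h1 := congrArg Prod.fst h
    have h2 := congrArg Prod.snd h
    funext i
    by_cases hi : i ∈ S
    · have := congrFun h2 i; simpa [hi] using this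
    · have := congrFun h1 i; simpa [hi] using this

theorem stmt11 {n : ℕ} (f : (Fin n → Bool) → Bool) (S : Finset (Fin n)) (κ : ℝ)
    (hne : (satOf f).Nonempty) :
    (∀ a ∈ satOf (majOf f S),
        ((2 : ℝ) ^ (n - S.card)) / 2
          ≤ (((satOf f).filter (fun y => ∀ i ∈ S, y i = a i)).card : ℝ)) ∧
    (∀ a ∈ satOf (majOf f S),
        (1 / (2 * ((satOf f).card : ℝ))) * (((satOf f).card : ℝ) * 2 ^ n)
          ≤ (((satOf f ×ˢ (Finset.univ : Finset (Fin n → Bool))).filter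
                (fun p => (fun i => if i ∈ S then p.1 i else p.2 i) = a)).card : ℝ)) ∧
    (κ * ((satOf f).card : ℝ) / 2 ≤ ((satOf (majOf f S) \ satOf f).card : ℝ) →
        (κ / 4) * (((satOf f).card : ℝ) * 2 ^ n)
          ≤ (((satOf f ×ˢ (Finset.univ : Finset (Fin n → Bool))).filter
                (fun p => f (fun i => if i ∈ S then p.1 i else p.2 i) = false)).card : ℝ)) := by
  have hN : (0:ℝ) < ((satOf f).card : ℝ) := by exact_mod_cast Finset.card_pos.mpr hne
  have hS : S.card ≤ n := by
    simpa using Finset.card_le_univ S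
  refine ⟨?_, ?_, ?_⟩
  · -- Part 1
    intro a ha
    have ha' : 2 ^ n ≤ 2 * ((univ : Finset (Fin n → Bool)).filter
        (fun v => f (fun i => if i ∈ S then a i else v i) = true)).card := by
      simpa [satOf, majOf] using ha
    set V := (univ : Finset (Fin n → Bool)).filter
        (fun v => f (fun i => if i ∈ S then a i else v i) = true) with hV
    set Y := (satOf f).filter (fun y => ∀ i ∈ S, y i = a i) with hY
    have hfib : V.card ≤ 2 ^ S.card * Y.card := by
      have := Finset.card_le_mul_card_image (f := fun v i => if i ∈ S then a i else v i)
        V (2 ^ S.card) ?_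
      · refine this.trans (Nat.mul_le_mul_left _ (Finset.card_le_card ?_))
        intro y hy
        simp only [Finset.mem_image] at hy
        obtain ⟨v, hv, rfl⟩ := hy
        simp only [hV, mem_filter, mem_univ, true_and] at hv
        simp only [hY, satOf, mem_filter, mem_univ, true_and]
        exact ⟨hv, fun i hi => by simp [hi]⟩
      · intro y hy
        rw [← card_agree S y]
        apply Finset.card_le_card
        intro v hv
        simp only [mem_filter, mem_univ, true_and] at hv ⊢
        intro i hi
        have := congrFun hv.2 i
        simpa [hi] using this
    have hnat : 2 ^ n ≤ 2 * (2 ^ S.card * Y.card) :=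
      ha'.trans (Nat.mul_le_mul_left 2 hfib)
    have hreal : (2:ℝ) ^ n ≤ 2 * (2 ^ S.card * (Y.card : ℝ)) := by exact_mod_cast hnat
    have h2 : (2:ℝ) ^ (n - S.card) = 2 ^ n / 2 ^ S.card := by
      rw [eq_div_iff (by positivity), ← pow_add, Nat.sub_add_cancel hS]
    rw [h2, div_div, div_le_iff₀ (by positivity)]
    nlinarith [pow_pos (by norm_num : (0:ℝ) < 2) S.card]
  · -- Part 2
    intro a ha
    have hk := key f S a ha
    have hreal : (2:ℝ) ^ n ≤ 2 * (((satOf f ×ˢ (univ : Finset (Fin n → Bool))).filter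
        (fun p => (fun i => if i ∈ S then p.1 i else p.2 i) = a)).card : ℝ) := by
      exact_mod_cast hk
    have hsimp : (1 / (2 * ((satOf f).card : ℝ))) * (((satOf f).card : ℝ) * 2 ^ n)
        = 2 ^ n / 2 := by field_simp
    rw [hsimp]
    linarith
  · -- Part 3
    intro hκ
    set B := satOf (majOf f S) \ satOf f with hB
    set T := satOf f ×ˢ (univ : Finset (Fin n → Bool)) with hT
    set comb := fun p : (Fin n → Bool) × (Fin n → Bool) =>
      (fun i => if i ∈ S then p.1 i else p.2 i) with hcomb
    -- card of pairs mapping into B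
    have hsum : (T.filter (fun p => comb p ∈ B)).card
        = ∑ a ∈ B, (T.filter (fun p => comb p = a)).card := by
      rw [Finset.card_eq_sum_card_fiberwise (f := comb) (t := B) (s := T.filter (fun p => comb p ∈ B))
        (fun p hp => Finset.mem_coe.mpr (Finset.mem_filter.mp (Finset.mem_coe.mp hp)).2)]
      refine Finset.sum_congr rfl (fun a haB => ?_)
      congr 1
      rw [Finset.filter_filter]
      apply Finset.filter_congr
      intro p hp
      constructor
      · exact fun h => h.2
      · exact fun h => ⟨by rw [h]; exact haB, h⟩
    have hlow : ∀ a ∈ B, 2 ^ n ≤ 2 * (T.filter (fun p => comb p = a)).card := by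
      intro a haB
      exact key f S a (Finset.mem_sdiff.mp haB).1
    have hcount : B.card * 2 ^ n ≤ 2 * (T.filter (fun p => comb p ∈ B)).card := by
      rw [hsum, Finset.mul_sum]
      calc B.card * 2 ^ n = ∑ _a ∈ B, 2 ^ n := by rw [Finset.sum_const, smul_eq_mul]
        _ ≤ ∑ a ∈ B, 2 * (T.filter (fun p => comb p = a)).card :=
            Finset.sum_le_sum hlow
    have hsub : (T.filter (fun p => comb p ∈ B)).card
        ≤ (T.filter (fun p => f (comb p) = false)).card := by
      apply Finset.card_le_card
      intro p hp
      simp only [mem_filter] at hp ⊢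
      refine ⟨hp.1, ?_⟩
      have : comb p ∉ satOf f := (Finset.mem_sdiff.mp hp.2).2
      simp only [satOf, mem_filter, mem_univ, true_and] at this
      simpa using this
    have hnat : B.card * 2 ^ n ≤ 2 * (T.filter (fun p => f (comb p) = false)).card :=
      hcount.trans (Nat.mul_le_mul_left 2 hsub)
    have hreal : (B.card : ℝ) * 2 ^ n
        ≤ 2 * ((T.filter (fun p => f (comb p) = false)).card : ℝ) := by
      exact_mod_cast hnat
    have h2n : (0:ℝ) ≤ (2:ℝ) ^ n := by positivity
    have := mul_le_mul_of_nonneg_right hκ h2n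
    calc (κ / 4) * (((satOf f).card : ℝ) * 2 ^ n)
        = (κ * ((satOf f).card : ℝ) / 2) * 2 ^ n / 2 := by ring
      _ ≤ (B.card : ℝ) * 2 ^ n / 2 := by linarith
      _ ≤ ((T.filter (fun p => f (comb p) = false)).card : ℝ) := by linarith
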